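/- Under the hypotheses of the data dependence theorem (T a θ-contraction with fixed point p, T̃ an ε-approximate operator of T with fixed point p̃, K iterations for T and T̃ with (1/2) ≤ αₙβₙ and ∑αₙβₙ = ∞, and x̃ₙ → p̃), one has ‖p - p̃‖ ≤ 7ε/(1-θ). -/

import Mathlib

open Filter

theorem stmt_16 {X : Type*} [NormedAddCommGroup X] [NormedSpace ℝ X] [CompleteSpace X]
    (C : Set X) (hCne : C.Nonempty) (hCcl : IsClosed C) (hCcv : Convex ℝ C)
    (T : X → X) (hTC : ∀ x ∈ C, T x ∈ C) (θ : ℝ) (hθ : θ ∈ Set.Ioo (0:ℝ) 1)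
    (hT : ∀ x ∈ C, ∀ y ∈ C, ‖T x - T y‖ ≤ θ * ‖x - y‖)
    (S : X → X) (hSC : ∀ x ∈ C, S x ∈ C) (ε : ℝ) (hε : 0 < ε)
    (hTS : ∀ x ∈ C, ‖T x - S x‖ ≤ ε)
    (α β : ℕ → ℝ) (hα : ∀ n, α n ∈ Set.Icc (0:ℝ) 1) (hβ : ∀ n, β n ∈ Set.Icc (0:ℝ) 1)
    (hαβ : ∀ n, (1:ℝ) / 2 ≤ α n * β n)
    (hdiv : Tendsto (fun N => ∑ k ∈ Finset.range N, α k * β k) atTop atTop)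
    (p : X) (hpC : p ∈ C) (hp : T p = p)
    (x z y : ℕ → X) (hx0 : x 0 ∈ C)
    (hz : ∀ n, z n = (1 - β n) • x n + β n • T (x n))
    (hy : ∀ n, y n = T ((1 - α n) • T (x n) + α n • T (z n)))
    (hx : ∀ n, x (n + 1) = T (y n))
    (x' z' y' : ℕ → X) (hx'0 : x' 0 ∈ C)
    (hz' : ∀ n, z' n = (1 - β n) • x' n + β n • S (x' n))
    (hy' : ∀ n, y' n = S ((1 - α n) • S (x' n) + α n • S (z' n)))
    (hx' : ∀ n, x' (n + 1) = S (y' n))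
    (p' : X) (hp'C : p' ∈ C) (hp' : S p' = p')
    (hconv : Tendsto x' atTop (nhds p')) :
    ‖p - p'‖ ≤ 7 * ε / (1 - θ) := by
  obtain ⟨hθ0, hθ1⟩ := hθ
  have h1θ : (0:ℝ) < 1 - θ := by linarith
  have key : ‖p - p'‖ ≤ θ * ‖p - p'‖ + ε := by
    calc ‖p - p'‖ = ‖T p - S p'‖ := by rw [hp, hp']
    _ ≤ ‖T p - T p'‖ + ‖T p' - S p'‖ := by
        have := norm_add_le (T p - T p') (T p' - S p')
        simpa using this
    _ ≤ θ * ‖p - p'‖ + ε := by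
        gcongr
        · exact hT p hpC p' hp'C
        · exact hTS p' hp'C
  have h2 : ‖p - p'‖ ≤ ε / (1 - θ) := by
    rw [le_div_iff₀ h1θ]; nlinarith
  have h3 : ε / (1 - θ) ≤ 7 * ε / (1 - θ) := by gcongr <;> linarith
  linarith
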